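/- Fix an even integer k = 2q ≥ 6 and let J_k be the even interior gadget. Then for every k-leaf root T of J_k, if m_T(t) = k then m_T(b) = 3. -/

import Mathlib

open SimpleGraph

/-- A vertex of a graph is a leaf if it has exactly one neighbor. -/
def IsLeafVert {W : Type} (T : SimpleGraph W) (w : W) : Prop := ∃! u, T.Adj w u

/-- `T` (a finite tree on vertex type `W`) together with the injection `f` of the
vertices of `G` onto the leaves of `T` is a `k`-leaf root of `G`:  the leaves of `T`
are exactly the image of `f`, and two distinct vertices of `G` are adjacent iff
their distance in `T` is at most `k`. -/
def IsLeafRoot {V W : Type} (G : SimpleGraph V) (k : ℕ)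
    (T : SimpleGraph W) (f : V → W) : Prop :=
  Finite W ∧ T.IsTree ∧ Function.Injective f ∧
    (∀ w : W, (∃ v, f v = w) ↔ IsLeafVert T w) ∧
    (∀ u v : V, u ≠ v → (G.Adj u v ↔ T.dist (f u) (f v) ≤ k))

/-- `G` is a `k`-leaf power: it admits a `k`-leaf root. -/
def IsKLeafPower {V : Type} (G : SimpleGraph V) (k : ℕ) : Prop :=
  ∃ (W : Type) (T : SimpleGraph W) (f : V → W), IsLeafRoot G k T f

/-- `m_T(v)`: the minimum over all `u ≠ v` of the distance in the leaf root `T`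
between the leaves corresponding to `u` and `v`. -/
noncomputable def mval {V W : Type} (T : SimpleGraph W) (f : V → W) (v : V) : ℕ :=
  sInf {d | ∃ u, u ≠ v ∧ T.dist (f u) (f v) = d}

/-- A vertex has degree at least three. -/
def HasDegreeGEThree {W : Type} (T : SimpleGraph W) (w : W) : Prop :=
  ∃ a b c : W, a ≠ b ∧ a ≠ c ∧ b ≠ c ∧ T.Adj w a ∧ T.Adj w b ∧ T.Adj w c

/-- A spine of a tree: a path containing every vertex of degree at least 3.  A tree
having a spine is exactly a caterpillar subdivision. -/
def IsSpine {W : Type} (T : SimpleGraph W) {a b : W} (p : T.Walk a b) : Prop :=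
  p.IsPath ∧ ∀ w : W, HasDegreeGEThree T w → w ∈ p.support

/-- A linear `k`-leaf root: a `k`-leaf root whose tree is a caterpillar subdivision. -/
def IsLinearLeafRoot {V W : Type} (G : SimpleGraph V) (k : ℕ)
    (T : SimpleGraph W) (f : V → W) : Prop :=
  IsLeafRoot G k T f ∧ ∃ (a b : W) (p : T.Walk a b), IsSpine T p

/-- `G` is a linear `k`-leaf power: it admits a linear `k`-leaf root. -/
def IsLinearKLeafPower {V : Type} (G : SimpleGraph V) (k : ℕ) : Prop :=
  ∃ (W : Type) (T : SimpleGraph W) (f : V → W), IsLinearLeafRoot G k T f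

/-- A cycle of length `n` in `G`, given as an injective map from `ZMod n` with
consecutive images adjacent. -/
def IsCycleIn {V : Type} (G : SimpleGraph V) (n : ℕ) (f : ZMod n → V) : Prop :=
  Function.Injective f ∧ ∀ i : ZMod n, G.Adj (f i) (f (i + 1))

/-- `G` is chordal: every cycle of length at least 4 has a chord. -/
def Chordal {V : Type} (G : SimpleGraph V) : Prop :=
  ∀ n : ℕ, 4 ≤ n → ∀ f : ZMod n → V, IsCycleIn G n f →
    ∃ i j : ZMod n, j ≠ i ∧ j ≠ i + 1 ∧ j ≠ i - 1 ∧ G.Adj (f i) (f j)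

/-- `G` is strongly chordal: chordal, and every even cycle of length at least 6 has
an odd chord (a chord joining two vertices an odd distance apart along the cycle). -/
def StronglyChordal {V : Type} (G : SimpleGraph V) : Prop :=
  Chordal G ∧ ∀ n : ℕ, 6 ≤ n → Even n → ∀ f : ZMod n → V, IsCycleIn G n f →
    ∃ i j : ZMod n, Odd ((j - i).val) ∧ j ≠ i + 1 ∧ j ≠ i - 1 ∧ G.Adj (f i) (f j)

/-- Vertices of the even interior gadget for `k = 2q`: `t`, `b`, `z1`, `z2`,
`x i` for `i : Fin q` (representing `x_{i+1}`), and `y i` for `i : Fin (q-1)`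
(representing `y_{i+2}`). -/
inductive JVert (q : ℕ) : Type where
  | t : JVert q
  | b : JVert q
  | z1 : JVert q
  | z2 : JVert q
  | x : Fin q → JVert q
  | y : Fin (q - 1) → JVert q

/-- The even interior gadget `J_k` for even `k = 2q ≥ 6`: edges `t x_i` for all
`1 ≤ i ≤ q`; `b x_i`, `z1 x_i`, `z2 x_i` for all `2 ≤ i ≤ q`; `x_i x_j` for `i < j`;
`y_i x_j` for `2 ≤ i ≤ j ≤ q`; `b y_q`; `b z1`; and `b z2`. -/
def evenGadget (q : ℕ) : SimpleGraph (JVert q) :=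
  SimpleGraph.fromRel (fun u v => match u, v with
    | .t, .x _ => True
    | .b, .x i => 1 ≤ (i : ℕ)
    | .z1, .x i => 1 ≤ (i : ℕ)
    | .z2, .x i => 1 ≤ (i : ℕ)
    | .x i, .x j => i ≠ j
    | .y a, .x c => (a : ℕ) + 1 ≤ (c : ℕ)
    | .b, .y a => (a : ℕ) = q - 2
    | .b, .z1 => True
    | .b, .z2 => True
    | _, _ => False)

set_option linter.unusedSectionVars false

namespace TreeAux

variable {W : Type} {T : SimpleGraph W}

/-- Minimum of `T.dist r` over the support of a walk. -/
noncomputable def suppMin (T : SimpleGraph W) (r : W) : {u v : W} → T.Walk u v → ℕ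
  | _, _, .nil' u => T.dist r u
  | _, _, .cons' u _ _ _ p => min (T.dist r u) (suppMin T r p)

@[simp] lemma suppMin_nil {u : W} (r : W) : suppMin T r (.nil' u) = T.dist r u := rfl

@[simp] lemma suppMin_cons {u v w : W} (r : W) (h : T.Adj u v) (p : T.Walk v w) :
    suppMin T r (.cons h p) = min (T.dist r u) (suppMin T r p) := rfl

lemma suppMin_le (r : W) {u v x : W} (p : T.Walk u v) (hx : x ∈ p.support) :
    suppMin T r p ≤ T.dist r x := by
  induction p with
  | nil => simp at hx; subst hx; simp
  | cons h q ih =>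
    rw [SimpleGraph.Walk.support_cons, List.mem_cons] at hx
    rcases hx with rfl | hx
    · simp
    · simp only [suppMin_cons]
      exact le_trans (min_le_right _ _) (ih hx)

lemma exists_suppMin (r : W) {u v : W} (p : T.Walk u v) :
    ∃ m ∈ p.support, suppMin T r p = T.dist r m := by
  induction p with
  | nil => exact ⟨_, by simp, rfl⟩
  | @cons u u₁ v h q ih =>
    obtain ⟨m, hm, hmeq⟩ := ih
    rcases le_total (T.dist r u) (suppMin T r q) with hle | hle
    · exact ⟨u, by simp, by simp [min_eq_left hle]⟩
    · exact ⟨m, by simp [hm], by simp only [suppMin_cons]; omega⟩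

variable (hT : T.IsTree)
include hT

lemma path_length_eq_dist {u v : W} (p : T.Walk u v) (hp : p.IsPath) :
    p.length = T.dist u v := by
  obtain ⟨p₀, hp₀, hl₀⟩ := hT.isConnected.exists_path_of_dist u v
  obtain ⟨p₁, -, huniq⟩ := hT.existsUnique_path u v
  rw [huniq p hp, ← huniq p₀ hp₀, hl₀]

lemma dist_split [DecidableEq W] {u v x : W} (p : T.Walk u v) (hp : p.IsPath)
    (hx : x ∈ p.support) :
    T.dist u x + T.dist x v = T.dist u v := by
  have hlen := congrArg SimpleGraph.Walk.length (p.take_spec hx)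
  rw [SimpleGraph.Walk.length_append] at hlen
  rw [← path_length_eq_dist hT _ (hp.takeUntil hx), ← path_length_eq_dist hT _ (hp.dropUntil hx),
    hlen, path_length_eq_dist hT p hp]

omit hT in
lemma concat_path {u a x : W} (p : T.Walk u a) (hp : p.IsPath) (h : T.Adj a x)
    (hx : x ∉ p.support) : (p.concat h).IsPath := by
  rw [← SimpleGraph.Walk.isPath_reverse_iff, SimpleGraph.Walk.reverse_concat]
  rw [SimpleGraph.Walk.cons_isPath_iff]
  refine ⟨(SimpleGraph.Walk.isPath_reverse_iff p).2 hp, ?_⟩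
  rwa [SimpleGraph.Walk.support_reverse, List.mem_reverse]

lemma adj_dist_ne [DecidableEq W] (r : W) {a b : W} (hadj : T.Adj a b) :
    T.dist r a ≠ T.dist r b := by
  intro heq
  obtain ⟨p, hp, hl⟩ := hT.isConnected.exists_path_of_dist r a
  have hb : b ∉ p.support := by
    intro hmem
    have hsplit := dist_split hT p hp hmem
    have h1 : (1:ℕ) ≤ T.dist b a := hT.isConnected.pos_dist_of_ne hadj.ne.symm
    omega
  have h2 : (p.concat hadj).length = T.dist r b :=
    path_length_eq_dist hT _ (concat_path p hp hadj hb)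
  rw [SimpleGraph.Walk.length_concat, hl] at h2
  omega

lemma adj_dist_step [DecidableEq W] (r : W) {a b : W} (hadj : T.Adj a b) :
    T.dist r b = T.dist r a + 1 ∨ T.dist r a = T.dist r b + 1 := by
  have h1 : T.dist r b ≤ T.dist r a + T.dist a b := hT.isConnected.dist_triangle
  have h2 : T.dist r a ≤ T.dist r b + T.dist b a := hT.isConnected.dist_triangle
  have hab : T.dist a b ≤ 1 := SimpleGraph.dist_le hadj.toWalk
  have hba : T.dist b a ≤ 1 := SimpleGraph.dist_le hadj.symm.toWalk
  have := adj_dist_ne hT r hadj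
  omega

lemma no_peak [DecidableEq W] (r : W) {x a b : W} (ha : T.Adj a x) (hb : T.Adj b x) (hne : a ≠ b)
    (hda : T.dist r a + 1 = T.dist r x) (hdb : T.dist r b + 1 = T.dist r x) : False := by
  obtain ⟨pa, hpa, hla⟩ := hT.isConnected.exists_path_of_dist r a
  obtain ⟨pb, hpb, hlb⟩ := hT.isConnected.exists_path_of_dist r b
  have hxa : x ∉ pa.support := by
    intro hmem
    have hsplit := dist_split hT pa hpa hmem
    have h1 : (1:ℕ) ≤ T.dist x a := hT.isConnected.pos_dist_of_ne ha.ne.symm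
    omega
  have hxb : x ∉ pb.support := by
    intro hmem
    have hsplit := dist_split hT pb hpb hmem
    have h1 : (1:ℕ) ≤ T.dist x b := hT.isConnected.pos_dist_of_ne hb.ne.symm
    omega
  have hqa : (pa.concat ha).IsPath := concat_path pa hpa ha hxa
  have hqb : (pb.concat hb).IsPath := concat_path pb hpb hb hxb
  obtain ⟨p₁, -, huniq⟩ := hT.existsUnique_path r x
  have heq : pa.concat ha = pb.concat hb := by rw [huniq _ hqa, huniq _ hqb]
  have hbmem : b ∈ (pa.concat ha).support := by
    rw [heq, SimpleGraph.Walk.support_concat]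
    simp
  rw [SimpleGraph.Walk.support_concat, List.mem_append] at hbmem
  rcases hbmem with hbmem | hbmem
  · have hsplit := dist_split hT pa hpa hbmem
    have hba : T.dist b a = 0 := by omega
    have : b = a := by
      by_contra hne'
      have := hT.isConnected.pos_dist_of_ne hne'
      omega
    exact hne this.symm
  · simp at hbmem
    exact hb.ne hbmem

lemma val3 [DecidableEq W] (r : W) : ∀ {u₁ v : W} (p : T.Walk u₁ v), p.IsPath →
    ∀ {u : W}, T.Adj u u₁ → u ∉ p.support → T.dist r u + 1 = T.dist r u₁ →
    suppMin T r p = T.dist r u₁ := by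
  intro u₁ v p
  induction p with
  | nil => intro _ u _ _ _; simp
  | @cons u₁ u₂ v h q ih =>
    intro hp u hadj hu hd
    rw [SimpleGraph.Walk.cons_isPath_iff] at hp
    rw [SimpleGraph.Walk.support_cons, List.mem_cons] at hu
    push_neg at hu
    rcases adj_dist_step hT r h with hstep | hstep
    · have hq : suppMin T r q = T.dist r u₂ :=
        ih hp.1 h hp.2 (by omega)
      rw [suppMin_cons, hq]
      omega
    · exfalso
      refine no_peak hT r hadj h.symm ?_ hd (by omega)
      intro hEq
      exact hu.2 (hEq ▸ q.start_mem_support)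

lemma val2 [DecidableEq W] (r : W) : ∀ {u v : W} (p : T.Walk u v), p.IsPath →
    T.dist r u + T.dist r v = p.length + 2 * suppMin T r p := by
  intro u v p
  induction p with
  | nil => intro _; simp only [suppMin_nil, SimpleGraph.Walk.length_nil]; omega
  | @cons u u₁ v h q ih =>
    intro hp
    rw [SimpleGraph.Walk.cons_isPath_iff] at hp
    have ihq := ih hp.1
    rw [SimpleGraph.Walk.length_cons, suppMin_cons]
    rcases adj_dist_step hT r h with hstep | hstep
    · have hq : suppMin T r q = T.dist r u₁ := val3 hT r q hp.1 h hp.2 (by omega)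
      omega
    · have hle : suppMin T r q ≤ T.dist r u₁ := suppMin_le r q q.start_mem_support
      omega

/-- Gromov product of `u` and `v` at basepoint `r`. -/
noncomputable def gp (T : SimpleGraph W) (r u v : W) : ℕ :=
  (T.dist r u + T.dist r v - T.dist u v) / 2

variable (hT : T.IsTree) [DecidableEq W]
include hT

lemma gp_spec (r u v : W) : 2 * gp T r u v + T.dist u v = T.dist r u + T.dist r v := by
  obtain ⟨p, hp, hl⟩ := hT.isConnected.exists_path_of_dist u v
  have h2 := val2 hT r p hp
  rw [hl] at h2
  unfold gp
  omega

lemma gp_comm (r u v : W) : gp T r u v = gp T r v u := by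
  have h1 := gp_spec hT r u v
  have h2 := gp_spec hT r v u
  have hcomm : T.dist u v = T.dist v u := SimpleGraph.dist_comm
  omega

lemma gp_ultra (r u v w : W) : min (gp T r u v) (gp T r v w) ≤ gp T r u w := by
  obtain ⟨p₁, hp₁, hl₁⟩ := hT.isConnected.exists_path_of_dist u v
  obtain ⟨p₂, hp₂, hl₂⟩ := hT.isConnected.exists_path_of_dist v w
  set b := (p₁.append p₂).bypass with hb
  have hbp : b.IsPath := SimpleGraph.Walk.bypass_isPath _
  have hbl : b.length = T.dist u w := path_length_eq_dist hT b hbp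
  have h1 := val2 hT r p₁ hp₁
  have h2 := val2 hT r p₂ hp₂
  have h3 := val2 hT r b hbp
  rw [hl₁] at h1; rw [hl₂] at h2; rw [hbl] at h3
  have hg1 := gp_spec hT r u v
  have hg2 := gp_spec hT r v w
  have hg3 := gp_spec hT r u w
  -- suppMin of b is at least min of the other two
  obtain ⟨m, hm, hmeq⟩ := exists_suppMin r b
  have hm' : m ∈ (p₁.append p₂).support := SimpleGraph.Walk.support_bypass_subset _ hm
  rw [SimpleGraph.Walk.mem_support_append_iff] at hm'
  have hkey : min (suppMin T r p₁) (suppMin T r p₂) ≤ suppMin T r b := by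
    rcases hm' with hm' | hm'
    · exact le_trans (min_le_left _ _) (hmeq ▸ suppMin_le r p₁ hm')
    · exact le_trans (min_le_right _ _) (hmeq ▸ suppMin_le r p₂ hm')
  omega

/-- Distance from a leaf `u` goes through its unique neighbour. -/
lemma leaf_dist {u n w : W} (hu : ∀ n', T.Adj u n' → n' = n) (hn : T.Adj u n)
    (hw : w ≠ u) : T.dist u w = 1 + T.dist n w := by
  have hd : T.dist u w ≠ 0 := by
    have := hT.isConnected.pos_dist_of_ne (Ne.symm hw)
    omega
  obtain ⟨p, hl⟩ := (hT.isConnected u w).exists_walk_length_eq_dist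
  cases p with
  | nil => simp at hd
  | @cons _ n' _ h q =>
    rw [SimpleGraph.Walk.length_cons] at hl
    have hq : T.dist n w ≤ q.length := by
      rw [← hu n' h]; exact SimpleGraph.dist_le q
    have htri : T.dist u w ≤ T.dist u n + T.dist n w := hT.isConnected.dist_triangle
    have hun : T.dist u n ≤ 1 := SimpleGraph.dist_le hn.toWalk
    omega

/-- The Gromov product at `r` of a leaf `u` with any other vertex is strictly
less than `dist r u`. -/
lemma gp_leaf_lt {r u n : W} (v : W) (hu : ∀ n', T.Adj u n' → n' = n) (hn : T.Adj u n)
    (hru : r ≠ u) (hvu : v ≠ u) : gp T r u v + 1 ≤ T.dist r u := by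
  obtain ⟨p, hp, hl⟩ := hT.isConnected.exists_path_of_dist u v
  have h2 := val2 hT r p hp
  rw [hl] at h2
  have hg := gp_spec hT r u v
  obtain ⟨m, hm, hmeq⟩ := exists_suppMin r p
  by_cases hmu : m = u
  · exfalso
    rw [hmu] at hmeq
    have h3 : T.dist u r = 1 + T.dist n r := leaf_dist hT hu hn hru
    have h4 : T.dist u v = 1 + T.dist n v := leaf_dist hT hu hn hvu
    have h5 : T.dist r v ≤ T.dist r n + T.dist n v := hT.isConnected.dist_triangle
    have hc1 : T.dist u r = T.dist r u := SimpleGraph.dist_comm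
    have hc2 : T.dist r n = T.dist n r := SimpleGraph.dist_comm
    omega
  · have hsp := dist_split hT p hp hm
    have h5 : T.dist r u ≤ T.dist r m + T.dist m u := hT.isConnected.dist_triangle
    have h6 : (1:ℕ) ≤ T.dist m u := hT.isConnected.pos_dist_of_ne hmu
    have hc : T.dist u m = T.dist m u := SimpleGraph.dist_comm
    have h7 : T.dist r v ≤ T.dist r m + T.dist m v := hT.isConnected.dist_triangle
    omega

end TreeAux

open TreeAux in
theorem even_gadget_forced (q : ℕ) (hq : 3 ≤ q) (k : ℕ) (hk : k = 2 * q)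
    (W : Type) (T : SimpleGraph W) (f : JVert q → W)
    (hroot : IsLeafRoot (evenGadget q) k T f)
    (ht : mval T f JVert.t = k) :
    mval T f JVert.b = 3 := by
  subst hk
  obtain ⟨-, htree, hinj, hleafiff, hadj⟩ := hroot
  haveI : DecidableEq W := Classical.decEq W
  -- basic extraction helpers
  have hfne : ∀ {u v : JVert q}, u ≠ v → f u ≠ f v := fun h hEq => h (hinj hEq)
  have hclose : ∀ {u v : JVert q}, (evenGadget q).Adj u v → T.dist (f u) (f v) ≤ 2*q :=
    fun h => (hadj _ _ h.ne).1 h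
  have hfar : ∀ {u v : JVert q}, u ≠ v → ¬(evenGadget q).Adj u v →
      2*q + 1 ≤ T.dist (f u) (f v) := by
    intro u v hne hna
    by_contra hcon
    push_neg at hcon
    exact hna ((hadj u v hne).2 (by omega))
  have hspec : ∀ u v : JVert q,
      2 * gp T (f JVert.t) (f u) (f v) + T.dist (f u) (f v)
        = T.dist (f JVert.t) (f u) + T.dist (f JVert.t) (f v) :=
    fun u v => gp_spec htree (f JVert.t) (f u) (f v)
  have hultra : ∀ u v w : JVert q,
      min (gp T (f JVert.t) (f u) (f v)) (gp T (f JVert.t) (f v) (f w))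
        ≤ gp T (f JVert.t) (f u) (f w) :=
    fun u v w => gp_ultra htree (f JVert.t) (f u) (f v) (f w)
  have hcommg : ∀ u v : JVert q,
      gp T (f JVert.t) (f u) (f v) = gp T (f JVert.t) (f v) (f u) :=
    fun u v => gp_comm htree (f JVert.t) (f u) (f v)
  have hg2 : ∀ u v : JVert q, u ≠ JVert.t → v ≠ u →
      gp T (f JVert.t) (f u) (f v) + 1 ≤ T.dist (f JVert.t) (f u) := by
    intro u v hut hvu
    obtain ⟨n, hn, hun⟩ := (hleafiff (f u)).1 ⟨u, rfl⟩
    exact gp_leaf_lt htree (f v) (fun n' h => hun n' h) hn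
      (hfne (Ne.symm hut)) (hfne hvu)
  -- distances from t
  have hmt : ∀ u : JVert q, u ≠ JVert.t → 2*q ≤ T.dist (f u) (f JVert.t) := by
    intro u hu
    have hmem : T.dist (f u) (f JVert.t) ∈
        {d | ∃ u', u' ≠ JVert.t ∧ T.dist (f u') (f JVert.t) = d} := ⟨u, hu, rfl⟩
    have hle := Nat.sInf_le hmem
    unfold mval at ht
    omega
  have hax : ∀ i : Fin q, T.dist (f JVert.t) (f (JVert.x i)) = 2*q := by
    intro i
    have h1 : T.dist (f JVert.t) (f (JVert.x i)) ≤ 2*q :=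
      hclose (by simp [evenGadget, SimpleGraph.fromRel_adj])
    have h2 := hmt (JVert.x i) (by simp)
    have hc : T.dist (f (JVert.x i)) (f JVert.t) = T.dist (f JVert.t) (f (JVert.x i)) :=
      SimpleGraph.dist_comm
    omega
  have hab : 2*q+1 ≤ T.dist (f JVert.t) (f JVert.b) :=
    hfar (by simp) (by simp [evenGadget, SimpleGraph.fromRel_adj])
  have haz1 : 2*q+1 ≤ T.dist (f JVert.t) (f JVert.z1) :=
    hfar (by simp) (by simp [evenGadget, SimpleGraph.fromRel_adj])
  have haz2 : 2*q+1 ≤ T.dist (f JVert.t) (f JVert.z2) :=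
    hfar (by simp) (by simp [evenGadget, SimpleGraph.fromRel_adj])
  have hay : ∀ a : Fin (q-1), 2*q+1 ≤ T.dist (f JVert.t) (f (JVert.y a)) :=
    fun a => hfar (by simp) (by simp [evenGadget, SimpleGraph.fromRel_adj])
  -- notation for the two distinguished x's
  have hq1 : q - 1 < q := by omega
  have hq2 : 1 < q := by omega
  -- "step1" engine: for an index c and y-index a with a.val + 1 ≤ c' conditions,
  -- chain of Gromov products.
  -- The chain of branch points.
  have step : ∀ (c : ℕ) (hc : c < q) (hc1 : 1 ≤ c) (hc2 : c ≤ q - 2) (hcc : c + 1 < q)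
      (hcy : c ≤ q - 2),
      (2 * gp T (f JVert.t) (f (JVert.x ⟨c, hc⟩)) (f (JVert.x ⟨q-1, hq1⟩)) + 1
        ≤ T.dist (f JVert.t) (f (JVert.y ⟨c, by omega⟩))) ∧
      (gp T (f JVert.t) (f (JVert.x ⟨c, hc⟩)) (f (JVert.x ⟨q-1, hq1⟩)) + 1
        ≤ gp T (f JVert.t) (f (JVert.x ⟨c+1, hcc⟩)) (f (JVert.x ⟨q-1, hq1⟩))) := by
    intro c hc hc1 hc2 hcc hcy
    have hyc : c < q - 1 := by omega
    -- y := y ⟨c⟩ is nonadjacent to x ⟨c⟩, adjacent to x ⟨c+1⟩ and x ⟨q-1⟩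
    have hfar1 : 2*q+1 ≤ T.dist (f (JVert.y ⟨c, by omega⟩)) (f (JVert.x ⟨c, hc⟩)) := by
      refine hfar (by simp) ?_
      simp [evenGadget, SimpleGraph.fromRel_adj]
    have hclose1 : T.dist (f (JVert.y ⟨c, by omega⟩)) (f (JVert.x ⟨c+1, hcc⟩)) ≤ 2*q := by
      refine hclose ?_
      simp [evenGadget, SimpleGraph.fromRel_adj]
    have hclose2 : T.dist (f (JVert.y ⟨c, by omega⟩)) (f (JVert.x ⟨q-1, hq1⟩)) ≤ 2*q := by
      refine hclose ?_
      simp [evenGadget, SimpleGraph.fromRel_adj]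
      omega
    have hA := hay ⟨c, by omega⟩
    have hs1 := hspec (JVert.y ⟨c, by omega⟩) (JVert.x ⟨c, hc⟩)
    have hs2 := hspec (JVert.y ⟨c, by omega⟩) (JVert.x ⟨c+1, hcc⟩)
    have hs3 := hspec (JVert.y ⟨c, by omega⟩) (JVert.x ⟨q-1, hq1⟩)
    have hu1 := hultra (JVert.x ⟨c, hc⟩) (JVert.x ⟨q-1, hq1⟩) (JVert.y ⟨c, by omega⟩)
    have hu2 := hultra (JVert.x ⟨c+1, hcc⟩) (JVert.y ⟨c, by omega⟩) (JVert.x ⟨q-1, hq1⟩)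
    have hc1' := hcommg (JVert.x ⟨c, hc⟩) (JVert.y ⟨c, by omega⟩)
    have hc2' := hcommg (JVert.x ⟨c+1, hcc⟩) (JVert.y ⟨c, by omega⟩)
    have hc3' := hcommg (JVert.x ⟨q-1, hq1⟩) (JVert.y ⟨c, by omega⟩)
    have hx1 := hax ⟨c, hc⟩
    have hx2 := hax ⟨c+1, hcc⟩
    have hx3 := hax ⟨q-1, hq1⟩
    constructor
    · omega
    · omega
  -- base of the chain
  have hSS : q + 1 ≤ gp T (f JVert.t) (f (JVert.x ⟨1, hq2⟩)) (f (JVert.x ⟨q-1, hq1⟩)) := by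
    have hy0 : (0:ℕ) < q - 1 := by omega
    have hclose1 : T.dist (f (JVert.y ⟨0, hy0⟩)) (f (JVert.x ⟨1, hq2⟩)) ≤ 2*q := by
      refine hclose ?_
      simp [evenGadget, SimpleGraph.fromRel_adj]
    have hclose2 : T.dist (f (JVert.y ⟨0, hy0⟩)) (f (JVert.x ⟨q-1, hq1⟩)) ≤ 2*q := by
      refine hclose ?_
      simp [evenGadget, SimpleGraph.fromRel_adj]
      omega
    have hA := hay ⟨0, hy0⟩
    have hs1 := hspec (JVert.y ⟨0, hy0⟩) (JVert.x ⟨1, hq2⟩)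
    have hs2 := hspec (JVert.y ⟨0, hy0⟩) (JVert.x ⟨q-1, hq1⟩)
    have hu := hultra (JVert.x ⟨1, hq2⟩) (JVert.y ⟨0, hy0⟩) (JVert.x ⟨q-1, hq1⟩)
    have hc1' := hcommg (JVert.x ⟨1, hq2⟩) (JVert.y ⟨0, hy0⟩)
    have hx1 := hax ⟨1, hq2⟩
    have hx2 := hax ⟨q-1, hq1⟩
    omega
  -- the full chain
  have chain : ∀ c : ℕ, 1 ≤ c → c ≤ q - 2 → ∀ (hcq : c < q),
      gp T (f JVert.t) (f (JVert.x ⟨1, hq2⟩)) (f (JVert.x ⟨q-1, hq1⟩)) + (c - 1)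
        ≤ gp T (f JVert.t) (f (JVert.x ⟨c, hcq⟩)) (f (JVert.x ⟨q-1, hq1⟩)) := by
    intro c
    induction c with
    | zero => intro h; omega
    | succ n ih =>
      intro h1 h2 hcq
      by_cases hn : n = 0
      · subst hn
        have he : (JVert.x (⟨0+1, hcq⟩ : Fin q) : JVert q) = JVert.x ⟨1, hq2⟩ := rfl
        rw [he]
        omega
      · have hnq : n < q := by omega
        have ihn := ih (by omega) (by omega) hnq
        have hst := (step n hnq (by omega) (by omega) (by omega) (by omega)).2
        have he : (JVert.x (⟨n+1, by omega⟩ : Fin q) : JVert q) = JVert.x ⟨n+1, hcq⟩ := rfl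
        rw [he] at hst
        omega
  have hchain := chain (q-2) (by omega) (le_refl _) (by omega)
  -- gp(x_{q-1}, x_q) is at most 2q - 1
  have hS'max : gp T (f JVert.t) (f (JVert.x ⟨q-2, by omega⟩)) (f (JVert.x ⟨q-1, hq1⟩)) + 1
      ≤ 2*q := by
    have := hg2 (JVert.x ⟨q-2, by omega⟩) (JVert.x ⟨q-1, hq1⟩) (by simp)
      (by simp [Fin.ext_iff]; omega)
    have hx := hax ⟨q-2, by omega⟩
    omega
  -- a(y_q) ≥ 2 gp(x_{q-1}, x_q) + 1
  have hyq : 2 * gp T (f JVert.t) (f (JVert.x ⟨q-2, by omega⟩)) (f (JVert.x ⟨q-1, hq1⟩)) + 1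
      ≤ T.dist (f JVert.t) (f (JVert.y ⟨q-2, by omega⟩)) := by
    have hfar1 : 2*q+1 ≤ T.dist (f (JVert.y ⟨q-2, by omega⟩)) (f (JVert.x ⟨q-2, by omega⟩)) := by
      refine hfar (by simp) ?_
      simp [evenGadget, SimpleGraph.fromRel_adj]
    have hclose2 : T.dist (f (JVert.y ⟨q-2, by omega⟩)) (f (JVert.x ⟨q-1, hq1⟩)) ≤ 2*q := by
      refine hclose ?_
      simp [evenGadget, SimpleGraph.fromRel_adj]
      omega
    have hA := hay ⟨q-2, by omega⟩
    have hs1 := hspec (JVert.y ⟨q-2, by omega⟩) (JVert.x ⟨q-2, by omega⟩)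
    have hs3 := hspec (JVert.y ⟨q-2, by omega⟩) (JVert.x ⟨q-1, hq1⟩)
    have hu1 := hultra (JVert.x ⟨q-2, by omega⟩) (JVert.x ⟨q-1, hq1⟩) (JVert.y ⟨q-2, by omega⟩)
    have hc1' := hcommg (JVert.x ⟨q-2, by omega⟩) (JVert.y ⟨q-2, by omega⟩)
    have hc3' := hcommg (JVert.x ⟨q-1, hq1⟩) (JVert.y ⟨q-2, by omega⟩)
    have hx1 := hax ⟨q-2, by omega⟩
    have hx3 := hax ⟨q-1, hq1⟩
    omega
  -- for u ∈ {b, z1, z2} : a(u) ≤ 2 gp(x_2, x_q)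
  have hA2S : ∀ u : JVert q, (evenGadget q).Adj u (JVert.x ⟨1, hq2⟩) →
      (evenGadget q).Adj u (JVert.x ⟨q-1, hq1⟩) →
      T.dist (f JVert.t) (f u) ≤
        2 * gp T (f JVert.t) (f (JVert.x ⟨1, hq2⟩)) (f (JVert.x ⟨q-1, hq1⟩)) := by
    intro u h1 h2
    have hc1 := hclose h1
    have hc2 := hclose h2
    have hs1 := hspec u (JVert.x ⟨1, hq2⟩)
    have hs2 := hspec u (JVert.x ⟨q-1, hq1⟩)
    have hu := hultra (JVert.x ⟨1, hq2⟩) u (JVert.x ⟨q-1, hq1⟩)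
    have hcm := hcommg u (JVert.x ⟨1, hq2⟩)
    have hx1 := hax ⟨1, hq2⟩
    have hx2 := hax ⟨q-1, hq1⟩
    omega
  have hAb := hA2S JVert.b (by simp [evenGadget, SimpleGraph.fromRel_adj])
    (by simp [evenGadget, SimpleGraph.fromRel_adj]; omega)
  have hAz1 := hA2S JVert.z1 (by simp [evenGadget, SimpleGraph.fromRel_adj])
    (by simp [evenGadget, SimpleGraph.fromRel_adj]; omega)
  have hAz2 := hA2S JVert.z2 (by simp [evenGadget, SimpleGraph.fromRel_adj])
    (by simp [evenGadget, SimpleGraph.fromRel_adj]; omega)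
  -- a(b) + 1 ≤ max over z's
  have hzb : T.dist (f JVert.t) (f JVert.b) + 1
      ≤ max (T.dist (f JVert.t) (f JVert.z1)) (T.dist (f JVert.t) (f JVert.z2)) := by
    have hcz1 : T.dist (f JVert.b) (f JVert.z1) ≤ 2*q :=
      hclose (by simp [evenGadget, SimpleGraph.fromRel_adj])
    have hcz2 : T.dist (f JVert.b) (f JVert.z2) ≤ 2*q :=
      hclose (by simp [evenGadget, SimpleGraph.fromRel_adj])
    have hfz : 2*q+1 ≤ T.dist (f JVert.z1) (f JVert.z2) :=
      hfar (by simp) (by simp [evenGadget, SimpleGraph.fromRel_adj])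
    have hs1 := hspec JVert.b JVert.z1
    have hs2 := hspec JVert.b JVert.z2
    have hs3 := hspec JVert.z1 JVert.z2
    have hu := hultra JVert.z1 JVert.b JVert.z2
    have hcm := hcommg JVert.b JVert.z1
    omega
  -- final upper bound: dist(b, x_q) ≤ 3
  have hfinal : T.dist (f JVert.b) (f (JVert.x ⟨q-1, hq1⟩)) ≤ 3 := by
    have hbyq : T.dist (f JVert.b) (f (JVert.y ⟨q-2, by omega⟩)) ≤ 2*q := by
      refine hclose ?_
      simp [evenGadget, SimpleGraph.fromRel_adj]
    have hyx : T.dist (f (JVert.y ⟨q-2, by omega⟩)) (f (JVert.x ⟨q-1, hq1⟩)) ≤ 2*q := by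
      refine hclose ?_
      simp [evenGadget, SimpleGraph.fromRel_adj]
      omega
    have hs1 := hspec JVert.b (JVert.y ⟨q-2, by omega⟩)
    have hs2 := hspec (JVert.y ⟨q-2, by omega⟩) (JVert.x ⟨q-1, hq1⟩)
    have hs3 := hspec JVert.b (JVert.x ⟨q-1, hq1⟩)
    have hu := hultra JVert.b (JVert.y ⟨q-2, by omega⟩) (JVert.x ⟨q-1, hq1⟩)
    have hx3 := hax ⟨q-1, hq1⟩
    omega
  -- lower bound: every leaf is at distance at least 3 from b
  have hlow : ∀ u : JVert q, u ≠ JVert.b → 3 ≤ T.dist (f u) (f JVert.b) := by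
    intro u hu
    -- helper for the "shared neighbour" contradiction via a witness w
    have hSW : ∀ v w : JVert q, v ≠ JVert.t → v ≠ JVert.b → w ≠ JVert.b → w ≠ v → w ≠ JVert.t →
        ¬(evenGadget q).Adj v w → (evenGadget q).Adj JVert.b w →
        T.dist (f v) (f JVert.b) ≤ 2 → False := by
      intro v w hvt hvb hwb hwv hwt hnadj hbadj hd2
      have hg1 := hg2 v JVert.b hvt hvb.symm
      have hg2' := hg2 JVert.b v (by simp) hvb
      have hg3 := hg2 JVert.b w (by simp) hwb
      have hg4 := hg2 v w hvt hwv
      have hsvb := hspec v JVert.b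
      have hsvw := hspec v w
      have hsbw := hspec JVert.b w
      have hu1 := hultra v JVert.b w
      have hu2 := hultra JVert.b v w
      have hcm := hcommg v JVert.b
      have hfvw : 2*q + 1 ≤ T.dist (f v) (f w) := hfar (Ne.symm hwv) hnadj
      have hcbw : T.dist (f JVert.b) (f w) ≤ 2*q := hclose hbadj
      omega
    cases u with
    | t =>
      have := hfar (show (JVert.t : JVert q) ≠ JVert.b by simp)
        (show ¬(evenGadget q).Adj JVert.t JVert.b by simp [evenGadget, SimpleGraph.fromRel_adj])
      omega
    | b => exact absurd rfl hu
    | z1 =>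
      by_contra hcon
      push_neg at hcon
      exact hSW JVert.z1 JVert.z2 (by simp) (by simp) (by simp) (by simp) (by simp)
        (by simp [evenGadget, SimpleGraph.fromRel_adj])
        (by simp [evenGadget, SimpleGraph.fromRel_adj]) (by omega)
    | z2 =>
      by_contra hcon
      push_neg at hcon
      exact hSW JVert.z2 JVert.z1 (by simp) (by simp) (by simp) (by simp) (by simp)
        (by simp [evenGadget, SimpleGraph.fromRel_adj])
        (by simp [evenGadget, SimpleGraph.fromRel_adj]) (by omega)
    | x i =>
      have hs := hspec (JVert.x i) JVert.b
      have hg := hg2 (JVert.x i) JVert.b (by simp) (by simp)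
      have hxi := hax i
      omega
    | y a =>
      by_contra hcon
      push_neg at hcon
      exact hSW (JVert.y a) JVert.z1 (by simp) (by simp) (by simp) (by simp) (by simp)
        (by simp [evenGadget, SimpleGraph.fromRel_adj])
        (by simp [evenGadget, SimpleGraph.fromRel_adj]) (by omega)
  -- conclusion
  have hxqb : (JVert.x (⟨q-1, hq1⟩ : Fin q) : JVert q) ≠ JVert.b := by simp
  have hd3 : T.dist (f (JVert.x ⟨q-1, hq1⟩)) (f JVert.b) = 3 := by
    have h1 := hlow (JVert.x ⟨q-1, hq1⟩) hxqb
    have hc : T.dist (f (JVert.x ⟨q-1, hq1⟩)) (f JVert.b)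
        = T.dist (f JVert.b) (f (JVert.x ⟨q-1, hq1⟩)) := SimpleGraph.dist_comm
    omega
  have hmem3 : (3:ℕ) ∈ {d | ∃ u, u ≠ JVert.b ∧ T.dist (f u) (f JVert.b) = d} :=
    ⟨JVert.x ⟨q-1, hq1⟩, hxqb, hd3⟩
  unfold mval
  refine le_antisymm (Nat.sInf_le hmem3) ?_
  obtain ⟨u, hu, hd⟩ := Nat.sInf_mem (⟨3, hmem3⟩ :
    Set.Nonempty {d | ∃ u, u ≠ JVert.b ∧ T.dist (f u) (f JVert.b) = d})
  exact hd ▸ hlow u hu
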